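/- Fix a real v > 1/2 and a tie-breaking rule. Let μ be a mixed strategy for AND with marginal CDFs F₁ x = μ{p : p.1 ≤ x} and F₂ y = μ{p : p.2 ≤ y}, and let μ' be a mixed strategy with the same marginals that is maximally correlated, i.e. μ'{p : p.1 ≤ x and p.2 ≤ y} = min (F₁ x) (F₂ y) for all x, y. Then μ' weakly dominates μ as a strategy of AND: U_and(μ', ν) ≥ U_and(μ, ν) for every mixed strategy ν of OR. -/

import Mathlib

open MeasureTheory Set
open scoped ENNReal

noncomputable section

/-- A bid profile for one player: a bid on each of the two items. -/
abbrev Bid := ℝ × ℝ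

/-- The maximum allowed bid `H = max 1 v`. -/
def Hval (v : ℝ) : ℝ := max 1 v

/-- The set of allowed bids `[0,H] × [0,H]`. -/
def box (v : ℝ) : Set Bid := Icc (0:ℝ) (Hval v) ×ˢ Icc (0:ℝ) (Hval v)

/-- A tie-breaking rule: measurable functions `t₁ t₂ : ℝ → [0,1]`, where `tᵢ x` is the
probability that AND wins item `i` when both players bid `x` on it. -/
structure TieRule where
  t1 : ℝ → ℝ
  t2 : ℝ → ℝ
  meas1 : Measurable t1
  meas2 : Measurable t2
  t1_nonneg : ∀ x, 0 ≤ t1 x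
  t1_le_one : ∀ x, t1 x ≤ 1
  t2_nonneg : ∀ x, 0 ≤ t2 x
  t2_le_one : ∀ x, t2 x ≤ 1

/-- Probability that AND wins item 1 with bids `a` (AND) and `b` (OR). -/
def q1 (T : TieRule) (a b : Bid) : ℝ :=
  if b.1 < a.1 then 1 else if a.1 = b.1 then T.t1 a.1 else 0

/-- Probability that AND wins item 2 with bids `a` (AND) and `b` (OR). -/
def q2 (T : TieRule) (a b : Bid) : ℝ :=
  if b.2 < a.2 then 1 else if a.2 = b.2 then T.t2 a.2 else 0

/-- Expected utility of the AND player at the pure profile `(a,b)`. -/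
def uAnd (T : TieRule) (a b : Bid) : ℝ :=
  q1 T a b * q2 T a b - a.1 * q1 T a b - a.2 * q2 T a b

/-- Expected utility of the OR player at the pure profile `(a,b)`. -/
def uOr (v : ℝ) (T : TieRule) (a b : Bid) : ℝ :=
  v * (1 - q1 T a b * q2 T a b) - b.1 * (1 - q1 T a b) - b.2 * (1 - q2 T a b)

/-- A mixed strategy: a Borel probability measure on `ℝ × ℝ` supported in the box. -/
def IsMixed (v : ℝ) (μ : Measure Bid) : Prop :=
  IsProbabilityMeasure μ ∧ μ (box v) = 1

/-- Expected utility of AND under mixed strategies. -/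
def UAnd (T : TieRule) (μ ν : Measure Bid) : ℝ :=
  ∫ p, uAnd T p.1 p.2 ∂(μ.prod ν)

/-- Expected utility of OR under mixed strategies. -/
def UOr (v : ℝ) (T : TieRule) (μ ν : Measure Bid) : ℝ :=
  ∫ p, uOr v T p.1 p.2 ∂(μ.prod ν)

/-- `(μ,ν)` is a mixed Nash equilibrium of the AND–OR game. -/
def IsNash (v : ℝ) (T : TieRule) (μ ν : Measure Bid) : Prop :=
  IsMixed v μ ∧ IsMixed v ν ∧
  (∀ a ∈ box v, (∫ b, uAnd T a b ∂ν) ≤ UAnd T μ ν) ∧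
  (∀ b ∈ box v, (∫ a, uOr v T a b ∂μ) ≤ UOr v T μ ν)

/-- The uniform probability measure on `[0,1] ⊆ ℝ`. -/
def P01 : Measure ℝ := volume.restrict (Icc (0:ℝ) 1)

/-- The OR equilibrium strategy `ν*`: bid `(x,0)` or `(0,x)` with probability `1/2` each,
where `x ∈ [0,1/2]` has CDF `x/(1-x)`. -/
def nuStar : Measure Bid :=
  (1/2 : ℝ≥0∞) • Measure.map (fun u => (u/(1+u), (0:ℝ))) P01 +
  (1/2 : ℝ≥0∞) • Measure.map (fun u => ((0:ℝ), u/(1+u))) P01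

/-- Inverse-CDF map for the AND equilibrium bid distribution. -/
def gAnd (v u : ℝ) : ℝ := if 0 < u then max 0 (v - (v - 1/2)/u) else 0

/-- The AND equilibrium strategy `μ*`: bid `(y,y)` where `y ∈ [0,1/2]` has CDF
`(v-1/2)/(v-y)`, with an atom of mass `1 - 1/(2v)` at `0`. -/
def muStar (v : ℝ) : Measure Bid := Measure.map (fun u => (gAnd v u, gAnd v u)) P01


section Aux

lemma indprod (U V : Set ℝ) (a : Bid) :
    (U ×ˢ V).indicator (1 : Bid → ℝ) a = U.indicator 1 a.1 * V.indicator 1 a.2 := by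
  by_cases h1 : a.1 ∈ U <;> by_cases h2 : a.2 ∈ V <;>
    simp [Set.indicator_apply, Set.mem_prod, h1, h2]

lemma Iio_eq_iUnion' (x : ℝ) : Iio x = ⋃ n : ℕ, Iic (x - 1/(n+1)) := by
  ext y
  simp only [mem_Iio, mem_iUnion, mem_Iic]
  constructor
  · intro h
    obtain ⟨n, hn⟩ := exists_nat_one_div_lt (sub_pos.2 h)
    exact ⟨n, by linarith⟩
  · rintro ⟨n, hn⟩
    have : (0:ℝ) < 1/(n+1) := by positivity
    linarith

lemma mono_seq (x : ℝ) : Monotone (fun n : ℕ => x - 1/((n:ℝ)+1)) := by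
  intro m n h
  have hm : ((m:ℝ)) ≤ n := Nat.cast_le.2 h
  have h1 : (0:ℝ) < m + 1 := by positivity
  have : (1:ℝ)/(n+1) ≤ 1/(m+1) := one_div_le_one_div_of_le h1 (by linarith)
  simp only []
  linarith

variable {μ μ' : Measure Bid}

lemma lower_le
    (hmax : ∀ x y : ℝ, μ' {p : Bid | p.1 ≤ x ∧ p.2 ≤ y} =
      min (μ {p : Bid | p.1 ≤ x}) (μ {p : Bid | p.2 ≤ y}))
    (x y : ℝ) : μ (Iic x ×ˢ Iic y) ≤ μ' (Iic x ×ˢ Iic y) := by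
  have hs : (Iic x ×ˢ Iic y : Set Bid) = {p : Bid | p.1 ≤ x ∧ p.2 ≤ y} := by
    ext p; simp [Set.mem_prod, Prod.le_def]
  rw [hs, hmax]
  exact le_min (measure_mono fun p hp => hp.1) (measure_mono fun p hp => hp.2)

lemma lower_le'
    (hmax : ∀ x y : ℝ, μ' {p : Bid | p.1 ≤ x ∧ p.2 ≤ y} =
      min (μ {p : Bid | p.1 ≤ x}) (μ {p : Bid | p.2 ≤ y}))
    (f g : ℕ → ℝ) (hf : Monotone f) (hg : Monotone g) (A B : Set ℝ)
    (hA : A = ⋃ n, Iic (f n)) (hB : B = ⋃ n, Iic (g n)) :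
    μ (A ×ˢ B) ≤ μ' (A ×ˢ B) := by
  have hAB : A ×ˢ B = ⋃ n, Iic (f n) ×ˢ Iic (g n) := by
    subst hA hB
    ext p
    simp only [mem_prod, mem_iUnion, mem_Iic]
    constructor
    · rintro ⟨⟨m, hm⟩, ⟨k, hk⟩⟩
      exact ⟨max m k, hm.trans (hf (le_max_left m k)), hk.trans (hg (le_max_right m k))⟩
    · rintro ⟨n, h1, h2⟩
      exact ⟨⟨n, h1⟩, ⟨n, h2⟩⟩
  have hmono : Monotone (fun n => Iic (f n) ×ˢ Iic (g n)) := fun m n h =>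
    prod_mono (Iic_subset_Iic.2 (hf h)) (Iic_subset_Iic.2 (hg h))
  rw [hAB, hmono.directed_le.measure_iUnion, hmono.directed_le.measure_iUnion]
  exact iSup_mono fun n => lower_le hmax (f n) (g n)

lemma lower_ray_le
    (hmax : ∀ x y : ℝ, μ' {p : Bid | p.1 ≤ x ∧ p.2 ≤ y} =
      min (μ {p : Bid | p.1 ≤ x}) (μ {p : Bid | p.2 ≤ y}))
    (A B : Set ℝ) (x y : ℝ)
    (hA : A = Iic x ∨ A = Iio x) (hB : B = Iic y ∨ B = Iio y) :
    μ (A ×ˢ B) ≤ μ' (A ×ˢ B) := by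
  obtain ⟨f, hfm, hfA⟩ : ∃ f : ℕ → ℝ, Monotone f ∧ A = ⋃ n, Iic (f n) := by
    rcases hA with h | h
    · exact ⟨fun _ => x, monotone_const, by rw [h, iUnion_const]⟩
    · exact ⟨fun n => x - 1/((n:ℝ)+1), mono_seq x, by rw [h, Iio_eq_iUnion' x]⟩
  obtain ⟨g, hgm, hgB⟩ : ∃ g : ℕ → ℝ, Monotone g ∧ B = ⋃ n, Iic (g n) := by
    rcases hB with h | h
    · exact ⟨fun _ => y, monotone_const, by rw [h, iUnion_const]⟩
    · exact ⟨fun n => y - 1/((n:ℝ)+1), mono_seq y, by rw [h, Iio_eq_iUnion' y]⟩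
  exact lower_le' hmax f g hfm hgm A B hfA hgB

lemma compl_prod_le [IsProbabilityMeasure μ] [IsProbabilityMeasure μ']
    (A B : Set ℝ) (hA : MeasurableSet A) (hB : MeasurableSet B)
    (hm1 : μ (A ×ˢ (univ : Set ℝ)) = μ' (A ×ˢ univ))
    (hm2 : μ ((univ : Set ℝ) ×ˢ B) = μ' (univ ×ˢ B))
    (hlow : μ (A ×ˢ B) ≤ μ' (A ×ˢ B)) :
    μ (Aᶜ ×ˢ Bᶜ) ≤ μ' (Aᶜ ×ˢ Bᶜ) := by
  have hc : (Aᶜ ×ˢ Bᶜ : Set Bid) = ((A ×ˢ (univ : Set ℝ)) ∪ ((univ : Set ℝ) ×ˢ B))ᶜ := by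
    ext p; simp [Set.mem_prod]
  have hinter : (A ×ˢ (univ : Set ℝ)) ∩ ((univ : Set ℝ) ×ˢ B) = A ×ˢ B := by
    ext p; simp [Set.mem_prod]
  have key : ∀ ρ : Measure Bid, IsProbabilityMeasure ρ →
      ρ (Aᶜ ×ˢ Bᶜ) + (ρ (A ×ˢ (univ : Set ℝ)) + ρ ((univ : Set ℝ) ×ˢ B)) = 1 + ρ (A ×ˢ B) := by
    intro ρ hρ
    have hSm : MeasurableSet ((A ×ˢ (univ : Set ℝ)) ∪ ((univ : Set ℝ) ×ˢ B)) :=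
      (hA.prod MeasurableSet.univ).union (MeasurableSet.univ.prod hB)
    have h1 := measure_union_add_inter (μ := ρ) (A ×ˢ (univ : Set ℝ)) (MeasurableSet.univ.prod hB)
    have h2 := measure_add_measure_compl (μ := ρ) hSm
    rw [hinter] at h1
    rw [hc]
    calc ρ ((A ×ˢ (univ : Set ℝ)) ∪ ((univ : Set ℝ) ×ˢ B))ᶜ +
          (ρ (A ×ˢ (univ : Set ℝ)) + ρ ((univ : Set ℝ) ×ˢ B))
        = ρ ((A ×ˢ (univ : Set ℝ)) ∪ ((univ : Set ℝ) ×ˢ B))ᶜ +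
          (ρ ((A ×ˢ (univ : Set ℝ)) ∪ ((univ : Set ℝ) ×ˢ B)) + ρ (A ×ˢ B)) := by rw [h1]
      _ = (ρ ((A ×ˢ (univ : Set ℝ)) ∪ ((univ : Set ℝ) ×ˢ B)) +
          ρ ((A ×ˢ (univ : Set ℝ)) ∪ ((univ : Set ℝ) ×ˢ B))ᶜ) + ρ (A ×ˢ B) := by ring
      _ = 1 + ρ (A ×ˢ B) := by rw [h2, measure_univ]
  have e1 := key μ ‹_›
  have e2 := key μ' ‹_›
  rw [hm1, hm2] at e1
  have hfin : μ' (A ×ˢ (univ : Set ℝ)) + μ' ((univ : Set ℝ) ×ˢ B) ≠ ∞ :=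
    (ENNReal.add_lt_top.2 ⟨measure_lt_top _ _, measure_lt_top _ _⟩).ne
  rw [← ENNReal.add_le_add_iff_right hfin, e1, e2]
  exact add_le_add le_rfl hlow

lemma ray_prod_le [IsProbabilityMeasure μ] [IsProbabilityMeasure μ']
    (h1 : Measure.map Prod.fst μ = Measure.map Prod.fst μ')
    (h2 : Measure.map Prod.snd μ = Measure.map Prod.snd μ')
    (hmax : ∀ x y : ℝ, μ' {p : Bid | p.1 ≤ x ∧ p.2 ≤ y} =
      min (μ {p : Bid | p.1 ≤ x}) (μ {p : Bid | p.2 ≤ y}))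
    (x y : ℝ) (U V : Set ℝ)
    (hU : U = Ioi x ∨ U = Ici x) (hV : V = Ioi y ∨ V = Ici y) :
    μ (U ×ˢ V) ≤ μ' (U ×ˢ V) := by
  have hAc : Uᶜ = Iic x ∨ Uᶜ = Iio x := by
    rcases hU with h | h
    · left; rw [h, compl_Ioi]
    · right; rw [h, compl_Ici]
  have hBc : Vᶜ = Iic y ∨ Vᶜ = Iio y := by
    rcases hV with h | h
    · left; rw [h, compl_Ioi]
    · right; rw [h, compl_Ici]
  have hAm : MeasurableSet (Uᶜ) := by
    rcases hAc with h | h <;> rw [h]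
    exacts [measurableSet_Iic, measurableSet_Iio]
  have hBm : MeasurableSet (Vᶜ) := by
    rcases hBc with h | h <;> rw [h]
    exacts [measurableSet_Iic, measurableSet_Iio]
  have hm1 : μ (Uᶜ ×ˢ (univ : Set ℝ)) = μ' (Uᶜ ×ˢ univ) := by
    have hpre : (Prod.fst ⁻¹' (Uᶜ) : Set Bid) = Uᶜ ×ˢ univ := by
      ext p; simp [Set.mem_prod, Prod.le_def]
    rw [← hpre, ← Measure.map_apply measurable_fst hAm,
      ← Measure.map_apply measurable_fst hAm, h1]
  have hm2 : μ ((univ : Set ℝ) ×ˢ Vᶜ) = μ' (univ ×ˢ Vᶜ) := by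
    have hpre : (Prod.snd ⁻¹' (Vᶜ) : Set Bid) = univ ×ˢ Vᶜ := by
      ext p; simp [Set.mem_prod, Prod.le_def]
    rw [← hpre, ← Measure.map_apply measurable_snd hBm,
      ← Measure.map_apply measurable_snd hBm, h2]
  have hlow := lower_ray_le hmax (Uᶜ) (Vᶜ) x y hAc hBc
  have := compl_prod_le (μ := μ) (μ' := μ') (Uᶜ) (Vᶜ) hAm hBm hm1 hm2 hlow
  rwa [compl_compl, compl_compl] at this

end Aux

section Aux2

/-- bid-on-item-1 payoff function of own bid, for fixed opponent bid `c`. -/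
def phiF (t : ℝ → ℝ) (c x : ℝ) : ℝ := if c < x then 1 else if x = c then t x else 0

lemma phiF_meas (t : ℝ → ℝ) (ht : Measurable t) (c : ℝ) : Measurable (phiF t c) := by
  unfold phiF
  exact Measurable.ite measurableSet_Ioi measurable_const
    (Measurable.ite (measurableSet_eq) ht measurable_const)

lemma phiF_nonneg (t : ℝ → ℝ) (htn : ∀ x, 0 ≤ t x) (c x : ℝ) : 0 ≤ phiF t c x := by
  unfold phiF; split_ifs <;> simp [htn]

lemma phiF_le_one (t : ℝ → ℝ) (htl : ∀ x, t x ≤ 1) (c x : ℝ) : phiF t c x ≤ 1 := by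
  unfold phiF; split_ifs <;> simp [htl]

lemma q1_eq_phiF (T : TieRule) (a b : Bid) : q1 T a b = phiF T.t1 b.1 a.1 := rfl
lemma q2_eq_phiF (T : TieRule) (a b : Bid) : q2 T a b = phiF T.t2 b.2 a.2 := rfl

lemma q1_nonneg (T : TieRule) (a b : Bid) : 0 ≤ q1 T a b :=
  phiF_nonneg _ T.t1_nonneg _ _
lemma q1_le_one (T : TieRule) (a b : Bid) : q1 T a b ≤ 1 :=
  phiF_le_one _ T.t1_le_one _ _
lemma q2_nonneg (T : TieRule) (a b : Bid) : 0 ≤ q2 T a b :=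
  phiF_nonneg _ T.t2_nonneg _ _
lemma q2_le_one (T : TieRule) (a b : Bid) : q2 T a b ≤ 1 :=
  phiF_le_one _ T.t2_le_one _ _

lemma Hval_pos (v : ℝ) : 0 < Hval v := lt_of_lt_of_le one_pos (le_max_left 1 v)

lemma uAnd_bound (v : ℝ) (T : TieRule) (a b : Bid) (ha : a ∈ box v) :
    ‖uAnd T a b‖ ≤ 1 + Hval v + Hval v := by
  obtain ⟨⟨ha1, ha1'⟩, ⟨ha2, ha2'⟩⟩ := ha
  have h1 := q1_nonneg T a b
  have h2 := q1_le_one T a b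
  have h3 := q2_nonneg T a b
  have h4 := q2_le_one T a b
  rw [uAnd, Real.norm_eq_abs, abs_le]
  constructor <;> nlinarith

/-- A measurable function bounded on the box is integrable w.r.t. a mixed strategy. -/
lemma integrable_of_box (v : ℝ) (C : ℝ) (ρ : Measure Bid) [IsProbabilityMeasure ρ]
    (hbox : ρ (box v) = 1) (f : Bid → ℝ) (hf : Measurable f)
    (hb : ∀ a ∈ box v, ‖f a‖ ≤ C) : Integrable f ρ := by
  have hmeas : MeasurableSet (box v) := measurableSet_Icc.prod measurableSet_Icc
  have hae : ∀ᵐ a ∂ρ, a ∈ box v := by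
    rw [ae_iff]
    have : {a : Bid | ¬ a ∈ box v} = (box v)ᶜ := rfl
    rw [this, measure_compl hmeas (measure_ne_top ρ _), measure_univ, hbox, tsub_self]
  exact Integrable.mono' (integrable_const C) hf.aestronglyMeasurable
    (hae.mono fun a ha => hb a ha)

lemma q1_decomp (T : TieRule) (a b : Bid) :
    q1 T a b = (1 - T.t1 b.1) * (Ioi b.1).indicator 1 a.1
      + T.t1 b.1 * (Ici b.1).indicator 1 a.1 := by
  rcases lt_trichotomy b.1 a.1 with h | h | h
  · rw [q1, if_pos h, indicator_of_mem (mem_Ioi.2 h), indicator_of_mem (mem_Ici.2 h.le)]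
    simp
  · rw [q1, if_neg (by rw [h]; exact lt_irrefl _), if_pos h.symm,
      indicator_of_notMem (by simp [h]), indicator_of_mem (mem_Ici.2 h.le)]
    rw [← h]; simp
  · rw [q1, if_neg (not_lt.2 h.le), if_neg h.ne,
      indicator_of_notMem (by simp [not_lt.2 h.le]),
      indicator_of_notMem (by simp [not_le.2 h])]
    ring

lemma q2_decomp (T : TieRule) (a b : Bid) :
    q2 T a b = (1 - T.t2 b.2) * (Ioi b.2).indicator 1 a.2
      + T.t2 b.2 * (Ici b.2).indicator 1 a.2 := by
  rcases lt_trichotomy b.2 a.2 with h | h | h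
  · rw [q2, if_pos h, indicator_of_mem (mem_Ioi.2 h), indicator_of_mem (mem_Ici.2 h.le)]
    simp
  · rw [q2, if_neg (by rw [h]; exact lt_irrefl _), if_pos h.symm,
      indicator_of_notMem (by simp [h]), indicator_of_mem (mem_Ici.2 h.le)]
    rw [← h]; simp
  · rw [q2, if_neg (not_lt.2 h.le), if_neg h.ne,
      indicator_of_notMem (by simp [not_lt.2 h.le]),
      indicator_of_notMem (by simp [not_le.2 h])]
    ring

lemma uAnd_decomp (T : TieRule) (b : Bid) (a : Bid) :
    uAnd T a b =
      (1 - T.t1 b.1) * (1 - T.t2 b.2) * (Ioi b.1 ×ˢ Ioi b.2).indicator 1 a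
      + (1 - T.t1 b.1) * T.t2 b.2 * (Ioi b.1 ×ˢ Ici b.2).indicator 1 a
      + T.t1 b.1 * (1 - T.t2 b.2) * (Ici b.1 ×ˢ Ioi b.2).indicator 1 a
      + T.t1 b.1 * T.t2 b.2 * (Ici b.1 ×ˢ Ici b.2).indicator 1 a
      - a.1 * q1 T a b - a.2 * q2 T a b := by
  rw [indprod, indprod, indprod, indprod, uAnd, q1_decomp T a b, q2_decomp T a b]
  ring

lemma integral_uAnd_eq (v : ℝ) (T : TieRule) (b : Bid) (ρ : Measure Bid)
    [IsProbabilityMeasure ρ] (hbox : ρ (box v) = 1) :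
    ∫ a, uAnd T a b ∂ρ =
      (1 - T.t1 b.1) * (1 - T.t2 b.2) * (ρ (Ioi b.1 ×ˢ Ioi b.2)).toReal
      + (1 - T.t1 b.1) * T.t2 b.2 * (ρ (Ioi b.1 ×ˢ Ici b.2)).toReal
      + T.t1 b.1 * (1 - T.t2 b.2) * (ρ (Ici b.1 ×ˢ Ioi b.2)).toReal
      + T.t1 b.1 * T.t2 b.2 * (ρ (Ici b.1 ×ˢ Ici b.2)).toReal
      - (∫ a, a.1 * q1 T a b ∂ρ) - (∫ a, a.2 * q2 T a b ∂ρ) := by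
  have hS11 : MeasurableSet (Ioi b.1 ×ˢ Ioi b.2) := measurableSet_Ioi.prod measurableSet_Ioi
  have hS12 : MeasurableSet (Ioi b.1 ×ˢ Ici b.2) := measurableSet_Ioi.prod measurableSet_Ici
  have hS21 : MeasurableSet (Ici b.1 ×ˢ Ioi b.2) := measurableSet_Ici.prod measurableSet_Ioi
  have hS22 : MeasurableSet (Ici b.1 ×ˢ Ici b.2) := measurableSet_Ici.prod measurableSet_Ici
  have hInt : ∀ (S : Set Bid), MeasurableSet S → Integrable (S.indicator (1 : Bid → ℝ)) ρ :=
    fun S hS => (integrable_const (1:ℝ)).indicator hS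
  have hIval : ∀ (S : Set Bid), MeasurableSet S →
      ∫ a, S.indicator (1 : Bid → ℝ) a ∂ρ = (ρ S).toReal := by
    intro S hS
    rw [show (S.indicator (1 : Bid → ℝ)) = S.indicator (fun _ => (1:ℝ)) from rfl,
      integral_indicator_const (1:ℝ) hS, smul_eq_mul, mul_one, measureReal_def]
  have hg1 : Integrable (fun a : Bid => a.1 * q1 T a b) ρ := by
    apply integrable_of_box v (Hval v) ρ hbox
    · exact measurable_fst.mul ((phiF_meas T.t1 T.meas1 b.1).comp measurable_fst)
    · intro a ha
      have := q1_nonneg T a b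
      have := q1_le_one T a b
      obtain ⟨⟨ha1, ha1'⟩, _⟩ := ha
      rw [Real.norm_eq_abs, abs_le]
      constructor <;> nlinarith [Hval_pos v]
  have hg2 : Integrable (fun a : Bid => a.2 * q2 T a b) ρ := by
    apply integrable_of_box v (Hval v) ρ hbox
    · exact measurable_snd.mul ((phiF_meas T.t2 T.meas2 b.2).comp measurable_snd)
    · intro a ha
      have := q2_nonneg T a b
      have := q2_le_one T a b
      obtain ⟨_, ⟨ha2, ha2'⟩⟩ := ha
      rw [Real.norm_eq_abs, abs_le]
      constructor <;> nlinarith [Hval_pos v]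
  have i11 : Integrable (fun a : Bid =>
      (1 - T.t1 b.1) * (1 - T.t2 b.2) * (Ioi b.1 ×ˢ Ioi b.2).indicator 1 a) ρ :=
    (hInt _ hS11).const_mul _
  have i12 : Integrable (fun a : Bid =>
      (1 - T.t1 b.1) * T.t2 b.2 * (Ioi b.1 ×ˢ Ici b.2).indicator 1 a) ρ :=
    (hInt _ hS12).const_mul _
  have i21 : Integrable (fun a : Bid =>
      T.t1 b.1 * (1 - T.t2 b.2) * (Ici b.1 ×ˢ Ioi b.2).indicator 1 a) ρ :=
    (hInt _ hS21).const_mul _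
  have i22 : Integrable (fun a : Bid =>
      T.t1 b.1 * T.t2 b.2 * (Ici b.1 ×ˢ Ici b.2).indicator 1 a) ρ :=
    (hInt _ hS22).const_mul _
  have is3 : Integrable (fun a : Bid =>
      (1 - T.t1 b.1) * (1 - T.t2 b.2) * (Ioi b.1 ×ˢ Ioi b.2).indicator 1 a
      + (1 - T.t1 b.1) * T.t2 b.2 * (Ioi b.1 ×ˢ Ici b.2).indicator 1 a) ρ := i11.add i12
  have is2 : Integrable (fun a : Bid =>
      (1 - T.t1 b.1) * (1 - T.t2 b.2) * (Ioi b.1 ×ˢ Ioi b.2).indicator 1 a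
      + (1 - T.t1 b.1) * T.t2 b.2 * (Ioi b.1 ×ˢ Ici b.2).indicator 1 a
      + T.t1 b.1 * (1 - T.t2 b.2) * (Ici b.1 ×ˢ Ioi b.2).indicator 1 a) ρ := is3.add i21
  have isum : Integrable (fun a : Bid =>
      (1 - T.t1 b.1) * (1 - T.t2 b.2) * (Ioi b.1 ×ˢ Ioi b.2).indicator 1 a
      + (1 - T.t1 b.1) * T.t2 b.2 * (Ioi b.1 ×ˢ Ici b.2).indicator 1 a
      + T.t1 b.1 * (1 - T.t2 b.2) * (Ici b.1 ×ˢ Ioi b.2).indicator 1 a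
      + T.t1 b.1 * T.t2 b.2 * (Ici b.1 ×ˢ Ici b.2).indicator 1 a) ρ := is2.add i22
  have isum1 : Integrable (fun a : Bid =>
      (1 - T.t1 b.1) * (1 - T.t2 b.2) * (Ioi b.1 ×ˢ Ioi b.2).indicator 1 a
      + (1 - T.t1 b.1) * T.t2 b.2 * (Ioi b.1 ×ˢ Ici b.2).indicator 1 a
      + T.t1 b.1 * (1 - T.t2 b.2) * (Ici b.1 ×ˢ Ioi b.2).indicator 1 a
      + T.t1 b.1 * T.t2 b.2 * (Ici b.1 ×ˢ Ici b.2).indicator 1 a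
      - a.1 * q1 T a b) ρ := isum.sub hg1
  simp only [uAnd_decomp T b]
  rw [integral_sub isum1 hg2, integral_sub isum hg1,
    integral_add is2 i22, integral_add is3 i21,
    integral_add i11 i12, integral_const_mul, integral_const_mul, integral_const_mul,
    integral_const_mul, hIval _ hS11, hIval _ hS12, hIval _ hS21, hIval _ hS22]

lemma inner_le (v : ℝ) (T : TieRule) {μ μ' : Measure Bid}
    (hμ : IsMixed v μ) (hμ' : IsMixed v μ')
    (h1 : Measure.map Prod.fst μ = Measure.map Prod.fst μ')
    (h2 : Measure.map Prod.snd μ = Measure.map Prod.snd μ')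
    (hmax : ∀ x y : ℝ, μ' {p : Bid | p.1 ≤ x ∧ p.2 ≤ y} =
      min (μ {p : Bid | p.1 ≤ x}) (μ {p : Bid | p.2 ≤ y}))
    (b : Bid) : ∫ a, uAnd T a b ∂μ ≤ ∫ a, uAnd T a b ∂μ' := by
  haveI := hμ.1
  haveI := hμ'.1
  rw [integral_uAnd_eq v T b μ hμ.2, integral_uAnd_eq v T b μ' hμ'.2]
  have hL1 : ∫ a, a.1 * q1 T a b ∂μ = ∫ a, a.1 * q1 T a b ∂μ' := by
    have hψ : Measurable (fun x : ℝ => x * phiF T.t1 b.1 x) :=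
      measurable_id.mul (phiF_meas T.t1 T.meas1 b.1)
    have e : ∀ (ρ : Measure Bid), ∫ a, a.1 * q1 T a b ∂ρ =
        ∫ x, x * phiF T.t1 b.1 x ∂(Measure.map Prod.fst ρ) := by
      intro ρ
      rw [integral_map measurable_fst.aemeasurable hψ.aestronglyMeasurable]
      rfl
    rw [e μ, e μ', h1]
  have hL2 : ∫ a, a.2 * q2 T a b ∂μ = ∫ a, a.2 * q2 T a b ∂μ' := by
    have hψ : Measurable (fun x : ℝ => x * phiF T.t2 b.2 x) :=
      measurable_id.mul (phiF_meas T.t2 T.meas2 b.2)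
    have e : ∀ (ρ : Measure Bid), ∫ a, a.2 * q2 T a b ∂ρ =
        ∫ x, x * phiF T.t2 b.2 x ∂(Measure.map Prod.snd ρ) := by
      intro ρ
      rw [integral_map measurable_snd.aemeasurable hψ.aestronglyMeasurable]
      rfl
    rw [e μ, e μ', h2]
  rw [hL1, hL2]
  have J : ∀ (U V : Set ℝ), (U = Ioi b.1 ∨ U = Ici b.1) → (V = Ioi b.2 ∨ V = Ici b.2) →
      (μ (U ×ˢ V)).toReal ≤ (μ' (U ×ˢ V)).toReal := by
    intro U V hU hV
    exact (ENNReal.toReal_le_toReal (measure_ne_top _ _) (measure_ne_top _ _)).2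
      (ray_prod_le h1 h2 hmax b.1 b.2 U V hU hV)
  have m11 := J _ _ (Or.inl rfl) (Or.inl rfl)
  have m12 := J _ _ (Or.inl rfl) (Or.inr rfl)
  have m21 := J _ _ (Or.inr rfl) (Or.inl rfl)
  have m22 := J _ _ (Or.inr rfl) (Or.inr rfl)
  have t1n := T.t1_nonneg b.1
  have t1l := T.t1_le_one b.1
  have t2n := T.t2_nonneg b.2
  have t2l := T.t2_le_one b.2
  have h11 := mul_le_mul_of_nonneg_left m11 (by nlinarith : (0:ℝ) ≤ (1 - T.t1 b.1) * (1 - T.t2 b.2))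
  have h12 := mul_le_mul_of_nonneg_left m12 (by nlinarith : (0:ℝ) ≤ (1 - T.t1 b.1) * T.t2 b.2)
  have h21 := mul_le_mul_of_nonneg_left m21 (by nlinarith : (0:ℝ) ≤ T.t1 b.1 * (1 - T.t2 b.2))
  have h22 := mul_le_mul_of_nonneg_left m22 (by nlinarith : (0:ℝ) ≤ T.t1 b.1 * T.t2 b.2)
  linarith

end Aux2

section Final

lemma q1_joint_meas (T : TieRule) : Measurable (fun p : Bid × Bid => q1 T p.1 p.2) := by
  unfold q1
  exact Measurable.ite (measurableSet_lt (measurable_snd.fst) (measurable_fst.fst))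
    measurable_const
    (Measurable.ite (measurableSet_eq_fun (measurable_fst.fst) (measurable_snd.fst))
      (T.meas1.comp measurable_fst.fst) measurable_const)

lemma q2_joint_meas (T : TieRule) : Measurable (fun p : Bid × Bid => q2 T p.1 p.2) := by
  unfold q2
  exact Measurable.ite (measurableSet_lt (measurable_snd.snd) (measurable_fst.snd))
    measurable_const
    (Measurable.ite (measurableSet_eq_fun (measurable_fst.snd) (measurable_snd.snd))
      (T.meas2.comp measurable_fst.snd) measurable_const)

lemma uAnd_joint_meas (T : TieRule) : Measurable (fun p : Bid × Bid => uAnd T p.1 p.2) := by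
  unfold uAnd
  exact (((q1_joint_meas T).mul (q2_joint_meas T)).sub
    ((measurable_fst.fst).mul (q1_joint_meas T))).sub
    ((measurable_fst.snd).mul (q2_joint_meas T))

lemma uAnd_joint_integrable (v : ℝ) (T : TieRule) (ρ ν : Measure Bid)
    [IsProbabilityMeasure ρ] [IsProbabilityMeasure ν] (hρ : ρ (box v) = 1) :
    Integrable (fun p : Bid × Bid => uAnd T p.1 p.2) (ρ.prod ν) := by
  have hmeas : MeasurableSet ((box v) ×ˢ (univ : Set Bid)) :=
    (measurableSet_Icc.prod measurableSet_Icc).prod MeasurableSet.univ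
  have hone : (ρ.prod ν) ((box v) ×ˢ (univ : Set Bid)) = 1 := by
    rw [Measure.prod_prod, hρ, measure_univ, one_mul]
  have hae : ∀ᵐ p ∂(ρ.prod ν), p.1 ∈ box v := by
    rw [ae_iff]
    have : {p : Bid × Bid | ¬ p.1 ∈ box v} = ((box v) ×ˢ (univ : Set Bid))ᶜ := by
      ext p; simp [Set.mem_prod]
    rw [this, measure_compl hmeas (measure_ne_top _ _), measure_univ, hone, tsub_self]
  exact Integrable.mono' (integrable_const (1 + Hval v + Hval v))
    (uAnd_joint_meas T).aestronglyMeasurable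
    (hae.mono fun p hp => uAnd_bound v T p.1 p.2 hp)

theorem max_correlated_dominates' (v : ℝ) (hv : 1/2 < v) (T : TieRule)
    (μ μ' : Measure Bid) (hμ : IsMixed v μ) (hμ' : IsMixed v μ')
    (h1 : Measure.map Prod.fst μ = Measure.map Prod.fst μ')
    (h2 : Measure.map Prod.snd μ = Measure.map Prod.snd μ')
    (hmax : ∀ x y : ℝ, μ' {p : Bid | p.1 ≤ x ∧ p.2 ≤ y} =
      min (μ {p : Bid | p.1 ≤ x}) (μ {p : Bid | p.2 ≤ y}))  :
    ∀ ν : Measure Bid, IsMixed v ν → UAnd T μ ν ≤ UAnd T μ' ν := by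
  intro ν hν
  haveI := hμ.1
  haveI := hμ'.1
  haveI := hν.1
  have hi := uAnd_joint_integrable v T μ ν hμ.2
  have hi' := uAnd_joint_integrable v T μ' ν hμ'.2
  have e1 : UAnd T μ ν = ∫ b, ∫ a, uAnd T a b ∂μ ∂ν :=
    integral_prod_symm _ hi
  have e2 : UAnd T μ' ν = ∫ b, ∫ a, uAnd T a b ∂μ' ∂ν :=
    integral_prod_symm _ hi'
  rw [e1, e2]
  exact integral_mono hi.integral_prod_right hi'.integral_prod_right
    (fun b => inner_le v T hμ hμ' h1 h2 hmax b)

end Final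

/-- If `μ'` has the same marginals as `μ` and is maximally correlated
(`μ'{p.1 ≤ x ∧ p.2 ≤ y} = min (F₁ x) (F₂ y)`), then `μ'` weakly dominates `μ` as a
strategy of AND. -/
theorem max_correlated_dominates (v : ℝ) (hv : 1/2 < v) (T : TieRule)
    (μ μ' : Measure Bid) (hμ : IsMixed v μ) (hμ' : IsMixed v μ')
    (h1 : Measure.map Prod.fst μ = Measure.map Prod.fst μ')
    (h2 : Measure.map Prod.snd μ = Measure.map Prod.snd μ')
    (hmax : ∀ x y : ℝ, μ' {p : Bid | p.1 ≤ x ∧ p.2 ≤ y} =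
      min (μ {p : Bid | p.1 ≤ x}) (μ {p : Bid | p.2 ≤ y})) :
    ∀ ν : Measure Bid, IsMixed v ν → UAnd T μ ν ≤ UAnd T μ' ν :=
  max_correlated_dominates' v hv T μ μ' hμ hμ' h1 h2 hmax
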